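/- arXiv:2108.02585 — 6 statements merged into one kernel-verified Lean document; each statement's English description precedes it below -/
import Mathlib

section
/- Let C = (V, E) be an abstract simplicial complex, a, b ∉ V, and C⁺ = C * {a, b} the join complex. If C⁺ has a geometric embedding in ℝ^{d+1}, then C has a geometric embedding in ℝ^d. Consequently, C geometrically embeds in ℝ^d if and only if C⁺ geometrically embeds in ℝ^{d+1}. -/
/-- An abstract simplicial complex: a family of nonempty finite sets
closed under taking nonempty subsets. -/
def IsComplex {α : Type*} [DecidableEq α] (E : Finset (Finset α)) : Prop :=
  (∀ e ∈ E, e.Nonempty) ∧ ∀ e ∈ E, ∀ e' ⊆ e, e'.Nonempty → e' ∈ E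

/-- A geometric embedding of an abstract simplicial complex in ℝ^d:
each hyperedge is mapped to an affinely independent point set (so spans a
simplex of dimension `|e| - 1`), and convex hulls of images of two hyperedges
intersect exactly in the convex hull of the image of their intersection. -/
def IsGeomEmbedding {α : Type*} [DecidableEq α] {d : ℕ} (E : Finset (Finset α))
    (φ : α → (Fin d → ℝ)) : Prop :=
  (∀ e ∈ E, AffineIndependent ℝ (fun v : ↥e => φ v)) ∧
  ∀ e ∈ E, ∀ e' ∈ E,
    convexHull ℝ (φ '' (e : Set α)) ∩ convexHull ℝ (φ '' (e' : Set α)) =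
      convexHull ℝ (φ '' ((e ∩ e' : Finset α) : Set α))

/-- The join complex `C * {a, b}`. -/
def joinTwo {α : Type*} [DecidableEq α] (E : Finset (Finset α)) (a b : α) :
    Finset (Finset α) :=
  E ∪ E.image (insert a) ∪ E.image (insert b) ∪ {{a}, {b}}

open Set

section helpers

variable {α : Type*} [DecidableEq α] {W : Type*} [AddCommGroup W] [Module ℝ W]

/-- Characterisation of affine independence of a finset-indexed family via weights. -/
lemma affInd_finset_iff (ψ : α → W) (s : Finset α) :
    AffineIndependent ℝ (fun v : ↥s => ψ ↑v) ↔
      ∀ w : α → ℝ, ∑ v ∈ s, w v = 0 → ∑ v ∈ s, w v • ψ v = 0 → ∀ v ∈ s, w v = 0 := by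
  constructor
  · intro h w hw0 hw1 v hv
    refine affineIndependent_iff.mp h Finset.univ (fun i => w ↑i) ?_ ?_ ⟨v, hv⟩ (Finset.mem_univ _)
    · rw [Finset.sum_coe_sort s w]; exact hw0
    · rw [Finset.sum_coe_sort s (fun v => w v • ψ v)]; exact hw1
  · intro h
    rw [affineIndependent_iff]
    intro t w hw0 hw1 i hit
    set w' : α → ℝ := fun v => if h : v ∈ s then (if ⟨v, h⟩ ∈ t then w ⟨v, h⟩ else 0) else 0
      with hw'def
    have key : ∀ j : ↥s, w' ↑j = if j ∈ t then w j else 0 := by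
      intro j
      simp only [hw'def, j.2, dif_pos, Subtype.coe_eta]
    have h0 : ∑ v ∈ s, w' v = 0 := by
      rw [← Finset.sum_coe_sort s w', Finset.sum_congr rfl (fun j _ => key j),
        Finset.sum_ite_mem, Finset.univ_inter]
      exact hw0
    have h1 : ∑ v ∈ s, w' v • ψ v = 0 := by
      rw [← Finset.sum_coe_sort s (fun v => w' v • ψ v)]
      have : ∀ j : ↥s, w' ↑j • ψ ↑j = if j ∈ t then w j • ψ ↑j else 0 := by
        intro j; rw [key j, ite_smul, zero_smul]
      rw [Finset.sum_congr rfl (fun j _ => this j), Finset.sum_ite_mem, Finset.univ_inter]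
      exact hw1
    have := h w' h0 h1 ↑i i.2
    rwa [key i, if_pos hit] at this

lemma mem_cone_intro {P x : W} {S : Set W} (hx : x ∈ convexHull ℝ S) {μ : ℝ}
    (h0 : 0 ≤ μ) (h1 : μ ≤ 1) :
    μ • P + (1 - μ) • x ∈ convexHull ℝ (insert P S) := by
  have hP : P ∈ convexHull ℝ (insert P S) := subset_convexHull _ _ (Set.mem_insert _ _)
  have hx' : x ∈ convexHull ℝ (insert P S) := convexHull_mono (Set.subset_insert _ _) hx
  exact (convex_convexHull ℝ _) hP hx' h0 (by linarith) (by ring)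

lemma mem_cone_elim {P p : W} {S : Set W} (hp : p ∈ convexHull ℝ (insert P S)) :
    p = P ∨ ∃ (μ : ℝ) (x : W), 0 ≤ μ ∧ μ < 1 ∧ x ∈ convexHull ℝ S ∧ p = μ • P + (1 - μ) • x := by
  rcases S.eq_empty_or_nonempty with h | h
  · subst h
    rw [insert_empty_eq, convexHull_singleton] at hp
    exact Or.inl hp
  · rw [convexHull_insert h] at hp
    obtain ⟨q, hq, hseg⟩ := Set.mem_iUnion₂.mp hp
    obtain ⟨x, hx, hseg⟩ := Set.mem_iUnion₂.mp hseg
    rw [Set.mem_singleton_iff] at hq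
    subst hq
    rw [segment_eq_image] at hseg
    obtain ⟨θ, ⟨h0, h1⟩, hpθ⟩ := hseg
    rcases eq_or_lt_of_le h0 with h | h
    · left; rw [← hpθ, ← h]; simp
    · right
      exact ⟨1 - θ, x, by linarith, by linarith, hx, by rw [← hpθ]; ring_nf⟩

variable (f : W →ₗ[ℝ] ℝ)

lemma conv_ker_eq_zero {S : Set W} (hS : ∀ x ∈ S, f x = 0) :
    ∀ x ∈ convexHull ℝ S, f x = 0 := by
  intro x hx
  have : convexHull ℝ S ⊆ (LinearMap.ker f : Set W) :=
    convexHull_min (fun y hy => LinearMap.mem_ker.mpr (hS y hy)) (LinearMap.ker f).convex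
  exact LinearMap.mem_ker.mp (this hx)

lemma cone_flat {P : W} {S T R : Set W} (hP : f P ≠ 0)
    (hS : ∀ x ∈ S, f x = 0) (hT : ∀ x ∈ T, f x = 0)
    (hST : convexHull ℝ S ∩ convexHull ℝ T = convexHull ℝ R) :
    convexHull ℝ (insert P S) ∩ convexHull ℝ T = convexHull ℝ R := by
  apply Set.Subset.antisymm
  · rintro p ⟨hp1, hp2⟩
    have hfp : f p = 0 := conv_ker_eq_zero f hT p hp2
    rcases mem_cone_elim hp1 with rfl | ⟨μ, x, h0, h1, hx, rfl⟩
    · exact absurd hfp hP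
    · have hfx : f x = 0 := conv_ker_eq_zero f hS x hx
      have : μ * f P = 0 := by
        simpa [map_add, map_smul, hfx] using hfp
      have hμ : μ = 0 := by
        rcases mul_eq_zero.mp this with h | h
        · exact h
        · exact absurd h hP
      have hperx : μ • P + (1 - μ) • x = x := by rw [hμ]; simp
      rw [hperx]
      rw [← hST]; exact ⟨hx, hperx ▸ hp2⟩
  · rw [← hST]
    exact Set.inter_subset_inter_left _ (convexHull_mono (Set.subset_insert _ _))

lemma cone_cone_same {P : W} {S T R : Set W} (hP : f P ≠ 0)
    (hS : ∀ x ∈ S, f x = 0) (hT : ∀ x ∈ T, f x = 0)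
    (hST : convexHull ℝ S ∩ convexHull ℝ T = convexHull ℝ R) :
    convexHull ℝ (insert P S) ∩ convexHull ℝ (insert P T) = convexHull ℝ (insert P R) := by
  apply Set.Subset.antisymm
  · rintro p ⟨hp1, hp2⟩
    rcases mem_cone_elim hp1 with rfl | ⟨μ, x, hμ0, hμ1, hx, hpx⟩
    · exact subset_convexHull _ _ (Set.mem_insert _ _)
    · rcases mem_cone_elim hp2 with hPP | ⟨ν, y, hν0, hν1, hy, hpy⟩
      · exfalso
        have hfx : f x = 0 := conv_ker_eq_zero f hS x hx
        have : f P = μ * f P := by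
          conv_lhs => rw [← hPP, hpx]
          simp [map_add, map_smul, hfx]
        have : (1 - μ) * f P = 0 := by ring_nf; linarith [this]
        rcases mul_eq_zero.mp this with h | h
        · linarith
        · exact hP h
      · have hfx : f x = 0 := conv_ker_eq_zero f hS x hx
        have hfy : f y = 0 := conv_ker_eq_zero f hT y hy
        have hfp1 : f p = μ * f P := by rw [hpx]; simp [map_add, map_smul, hfx]
        have hfp2 : f p = ν * f P := by rw [hpy]; simp [map_add, map_smul, hfy]
        have hμν : μ = ν := by
          have : (μ - ν) * f P = 0 := by rw [sub_mul]; rw [hfp1] at hfp2; linarith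
          rcases mul_eq_zero.mp this with h | h
          · linarith
          · exact absurd h hP
        have hxy : x = y := by
          have hsub : (1 - μ) • x = (1 - μ) • y := by
            have := hpx.symm.trans hpy
            rw [← hμν] at this
            have := add_left_cancel this
            exact this
          have h1μ : (1 : ℝ) - μ ≠ 0 := by linarith
          exact smul_right_injective W h1μ hsub
        have hxR : x ∈ convexHull ℝ R := by rw [← hST]; exact ⟨hx, hxy ▸ hy⟩
        rw [hpx]
        exact mem_cone_intro hxR hμ0 (by linarith)
  · apply convexHull_min
    · intro q hq
      rcases Set.mem_insert_iff.mp hq with rfl | hqR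
      · exact ⟨subset_convexHull _ _ (Set.mem_insert _ _),
          subset_convexHull _ _ (Set.mem_insert _ _)⟩
      · have : q ∈ convexHull ℝ S ∩ convexHull ℝ T := by
          rw [hST]; exact subset_convexHull _ _ hqR
        exact ⟨convexHull_mono (Set.subset_insert _ _) this.1,
          convexHull_mono (Set.subset_insert _ _) this.2⟩
    · exact Convex.inter (convex_convexHull _ _) (convex_convexHull _ _)

lemma cone_cone_mixed {P Q : W} {S T R : Set W} (hP : 0 < f P) (hQ : f Q < 0)
    (hS : ∀ x ∈ S, f x = 0) (hT : ∀ x ∈ T, f x = 0)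
    (hST : convexHull ℝ S ∩ convexHull ℝ T = convexHull ℝ R) :
    convexHull ℝ (insert P S) ∩ convexHull ℝ (insert Q T) = convexHull ℝ R := by
  apply Set.Subset.antisymm
  · rintro p ⟨hp1, hp2⟩
    rcases mem_cone_elim hp1 with hpP | ⟨μ, x, hμ0, hμ1, hx, hpx⟩
    · rcases mem_cone_elim hp2 with hPQ | ⟨ν, y, hν0, hν1, hy, hpy⟩
      · exfalso; rw [hpP.symm.trans hPQ] at hP; linarith
      · exfalso
        have hfy : f y = 0 := conv_ker_eq_zero f hT y hy
        have : f P = ν * f Q := by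
          conv_lhs => rw [← hpP, hpy]
          simp [map_add, map_smul, hfy]
        nlinarith
    · have hfx : f x = 0 := conv_ker_eq_zero f hS x hx
      have hfp1 : f p = μ * f P := by rw [hpx]; simp [map_add, map_smul, hfx]
      rcases mem_cone_elim hp2 with hpQ | ⟨ν, y, hν0, hν1, hy, hpy⟩
      · exfalso; rw [hpQ] at hfp1; nlinarith
      · have hfy : f y = 0 := conv_ker_eq_zero f hT y hy
        have hfp2 : f p = ν * f Q := by rw [hpy]; simp [map_add, map_smul, hfy]
        have hμ : μ = 0 := by nlinarith
        have hν : ν = 0 := by nlinarith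
        have hpx' : p = x := by rw [hpx, hμ]; simp
        have hpy' : p = y := by rw [hpy, hν]; simp
        rw [← hST]
        exact ⟨hpx' ▸ hx, hpy' ▸ hy⟩
  · rw [← hST]
    exact Set.inter_subset_inter (convexHull_mono (Set.subset_insert _ _))
      (convexHull_mono (Set.subset_insert _ _))

end helpers
open Set

-- finset identities
section finsetids
variable {α : Type*} [DecidableEq α]

lemma fid1 {c : α} {s t : Finset α} (hc : c ∉ t) : (insert c s) ∩ t = s ∩ t := by
  ext x
  simp only [Finset.mem_inter, Finset.mem_insert]
  constructor
  · rintro ⟨rfl | hx, hx'⟩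
    · exact absurd hx' hc
    · exact ⟨hx, hx'⟩
  · rintro ⟨hx, hx'⟩; exact ⟨Or.inr hx, hx'⟩

lemma fid2 {c : α} {s t : Finset α} : (insert c s) ∩ (insert c t) = insert c (s ∩ t) := by
  ext x
  simp only [Finset.mem_inter, Finset.mem_insert]
  tauto

lemma fid3 {a b : α} {s t : Finset α} (hab : a ≠ b) (hat : a ∉ t) (hbs : b ∉ s) :
    (insert a s) ∩ (insert b t) = s ∩ t := by
  ext x
  simp only [Finset.mem_inter, Finset.mem_insert]
  constructor
  · rintro ⟨rfl | hx, rfl | hx'⟩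
    · exact absurd rfl hab
    · exact absurd hx' hat
    · exact absurd hx hbs
    · exact ⟨hx, hx'⟩
  · rintro ⟨hx, hx'⟩; exact ⟨Or.inr hx, Or.inr hx'⟩

end finsetids
section joinlemmas
variable {α : Type*} [DecidableEq α] {E : Finset (Finset α)} {a b : α}

lemma mem_joinTwo_iff {s : Finset α} :
    s ∈ joinTwo E a b ↔
      s ∈ E ∨ (∃ e ∈ E, insert a e = s) ∨ (∃ e ∈ E, insert b e = s) ∨ s = {a} ∨ s = {b} := by
  simp only [joinTwo, Finset.mem_union, Finset.mem_image, Finset.mem_insert,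
    Finset.mem_singleton, or_assoc]
  try tauto

lemma joinTwo_shape {s : Finset α} (hs : s ∈ joinTwo E a b) :
    s ∈ E ∨ (∃ c e, (c = a ∨ c = b) ∧ (e ∈ E ∨ e = ∅) ∧ s = insert c e) := by
  rcases mem_joinTwo_iff.mp hs with h | ⟨e, he, h⟩ | ⟨e, he, h⟩ | h | h
  · exact Or.inl h
  · exact Or.inr ⟨a, e, Or.inl rfl, Or.inl he, h.symm⟩
  · exact Or.inr ⟨b, e, Or.inr rfl, Or.inl he, h.symm⟩
  · exact Or.inr ⟨a, ∅, Or.inl rfl, Or.inr rfl, by rw [h, insert_empty_eq]⟩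
  · exact Or.inr ⟨b, ∅, Or.inr rfl, Or.inr rfl, by rw [h, insert_empty_eq]⟩

lemma joinTwo_mem_left {e : Finset α} (he : e ∈ E) : e ∈ joinTwo E a b :=
  mem_joinTwo_iff.mpr (Or.inl he)

lemma joinTwo_mem_inserta {e : Finset α} (he : e ∈ E) : insert a e ∈ joinTwo E a b :=
  mem_joinTwo_iff.mpr (Or.inr (Or.inl ⟨e, he, rfl⟩))

lemma joinTwo_mem_insertb {e : Finset α} (he : e ∈ E) : insert b e ∈ joinTwo E a b :=
  mem_joinTwo_iff.mpr (Or.inr (Or.inr (Or.inl ⟨e, he, rfl⟩)))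

lemma joinTwo_mem_sa : ({a} : Finset α) ∈ joinTwo E a b :=
  mem_joinTwo_iff.mpr (Or.inr (Or.inr (Or.inr (Or.inl rfl))))

lemma joinTwo_mem_sb : ({b} : Finset α) ∈ joinTwo E a b :=
  mem_joinTwo_iff.mpr (Or.inr (Or.inr (Or.inr (Or.inr rfl))))

end joinlemmas
section forward
open Finset in
lemma forward_dir {α : Type*} [DecidableEq α] {d : ℕ} (V : Finset α)
    (E : Finset (Finset α)) (hC : IsComplex E) (hV : ∀ e ∈ E, e ⊆ V)
    (a b : α) (ha : a ∉ V) (hb : b ∉ V) (hab : a ≠ b)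
    (φ : α → (Fin d → ℝ)) (hφ : IsGeomEmbedding E φ) :
    ∃ ψ : α → (Fin (d + 1) → ℝ), IsGeomEmbedding (joinTwo E a b) ψ := by
  classical
  set f : (Fin (d + 1) → ℝ) →ₗ[ℝ] ℝ := LinearMap.proj (Fin.last d) with hf
  set ι0 : (Fin d → ℝ) →ₗ[ℝ] (Fin (d + 1) → ℝ) :=
    { toFun := fun x i => if h : (i : ℕ) < d then x ⟨i, h⟩ else 0
      map_add' := by intro x y; funext i; by_cases h : (i : ℕ) < d <;> simp [h]
      map_smul' := by intro c x; funext i; by_cases h : (i : ℕ) < d <;> simp [h] } with hι0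
  have hι0inj : Function.Injective ι0 := by
    intro x y hxy
    funext j
    have := congrFun hxy (Fin.castSucc j)
    simpa [hι0, Fin.is_lt] using this
  have hfι : ∀ x, f (ι0 x) = 0 := by
    intro x
    simp [hf, hι0, LinearMap.proj]
  set A : Fin (d + 1) → ℝ := Pi.single (Fin.last d) 1 with hA
  set ψ : α → (Fin (d + 1) → ℝ) :=
    fun v => if v = a then A else if v = b then -A else ι0 (φ v) with hψ
  have hψa : ψ a = A := by simp [hψ]
  have hψb : ψ b = -A := by simp [hψ, hab.symm]
  have hfA : f A = 1 := by simp [hf, hA, LinearMap.proj]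
  have hψV : ∀ v ∈ V, ψ v = ι0 (φ v) := by
    intro v hv
    have h1 : v ≠ a := fun h => ha (h ▸ hv)
    have h2 : v ≠ b := fun h => hb (h ▸ hv)
    simp [hψ, h1, h2]
  have himg : ∀ e : Finset α, e ⊆ V → ψ '' ↑e = ι0 '' (φ '' ↑e) := by
    intro e he
    exact (Set.image_congr fun v hv => hψV v (he hv)).trans (Set.image_image ι0 φ ↑e).symm
  have hker : ∀ e : Finset α, e ⊆ V → ∀ x ∈ ψ '' ↑e, f x = 0 := by
    rintro e he x ⟨v, hv, rfl⟩
    rw [hψV v (he hv)]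
    exact hfι _
  have hEV : ∀ e : Finset α, e ∈ E ∨ e = ∅ → e ⊆ V := by
    rintro e (he | rfl)
    · exact hV e he
    · exact Finset.empty_subset _
  have hbase : ∀ e e' : Finset α, (e ∈ E ∨ e = ∅) → (e' ∈ E ∨ e' = ∅) →
      convexHull ℝ (ψ '' ↑e) ∩ convexHull ℝ (ψ '' ↑e')
        = convexHull ℝ (ψ '' ↑(e ∩ e')) := by
    rintro e e' (he | rfl) (he' | rfl)
    · rw [himg e (hV e he), himg e' (hV e' he'),
        himg (e ∩ e') ((Finset.inter_subset_left).trans (hV e he)),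
        ← LinearMap.image_convexHull, ← LinearMap.image_convexHull,
        ← LinearMap.image_convexHull, ← Set.image_inter hι0inj, hφ.2 e he e' he']
    · simp
    · simp
    · simp
  -- affine independence helper for the flat part
  have htail : ∀ e ∈ E, ∀ w : α → ℝ, ∑ v ∈ e, w v = 0 → ∑ v ∈ e, w v • ψ v = 0 →
      ∀ v ∈ e, w v = 0 := by
    intro e he w h0 h1
    have hsum : ι0 (∑ v ∈ e, w v • φ v) = ∑ v ∈ e, w v • ψ v := by
      rw [map_sum]
      exact Finset.sum_congr rfl (fun v hv => by rw [map_smul, hψV v (hV e he hv)])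
    have h1' : ∑ v ∈ e, w v • φ v = 0 := by
      apply hι0inj
      rw [hsum, h1, map_zero]
    exact (affInd_finset_iff φ e).mp (hφ.1 e he) w h0 h1'
  have hindcone : ∀ c : α, c ∉ V → f (ψ c) ≠ 0 → ∀ e : Finset α, (e ∈ E ∨ e = ∅) →
      ∀ w : α → ℝ, ∑ v ∈ insert c e, w v = 0 → ∑ v ∈ insert c e, w v • ψ v = 0 →
      ∀ v ∈ insert c e, w v = 0 := by
    intro c hc hfc e he w h0 h1
    have heV : e ⊆ V := hEV e he
    have hce : c ∉ e := fun h => hc (heV h)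
    rw [Finset.sum_insert hce] at h0 h1
    have hwc : w c = 0 := by
      have hfs := congrArg f h1
      rw [map_add, map_smul, map_sum, map_zero] at hfs
      have hz : ∑ v ∈ e, f (w v • ψ v) = 0 := by
        apply Finset.sum_eq_zero
        intro v hv
        rw [map_smul, hψV v (heV hv), hfι, smul_zero]
      rw [hz, add_zero, smul_eq_mul] at hfs
      rcases mul_eq_zero.mp hfs with h | h
      · exact h
      · exact absurd h hfc
    have h0' : ∑ v ∈ e, w v = 0 := by rw [hwc, zero_add] at h0; exact h0
    have h1' : ∑ v ∈ e, w v • ψ v = 0 := by rw [hwc, zero_smul, zero_add] at h1; exact h1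
    intro v hv
    rcases Finset.mem_insert.mp hv with rfl | hv'
    · exact hwc
    · rcases he with he | rfl
      · exact htail e he w h0' h1' v hv'
      · exact absurd hv' (Finset.notMem_empty v)
  refine ⟨ψ, ?_, ?_⟩
  · intro s hs
    rcases joinTwo_shape hs with hsE | ⟨c, e, hc, he, rfl⟩
    · exact (affInd_finset_iff ψ s).mpr (htail s hsE)
    · have hcV : c ∉ V := by rcases hc with rfl | rfl; exacts [ha, hb]
      have hfc : f (ψ c) ≠ 0 := by
        rcases hc with rfl | rfl
        · rw [hψa, hfA]; norm_num
        · rw [hψb, map_neg, hfA]; norm_num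
      exact (affInd_finset_iff ψ (insert c e)).mpr (hindcone c hcV hfc e he)
  · -- intersections
    have hconeflat : ∀ c : α, c ∉ V → f (ψ c) ≠ 0 → ∀ e e' : Finset α,
        (e ∈ E ∨ e = ∅) → e' ∈ E →
        convexHull ℝ (ψ '' ↑(insert c e)) ∩ convexHull ℝ (ψ '' ↑e')
          = convexHull ℝ (ψ '' ↑((insert c e) ∩ e')) := by
      intro c hc hfc e e' he he'
      have hce' : c ∉ e' := fun h => hc (hV e' he' h)
      rw [fid1 hce', Finset.coe_insert, Set.image_insert_eq]
      exact cone_flat f hfc (hker e (hEV e he)) (hker e' (hV e' he'))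
        (hbase e e' he (Or.inl he'))
    have hsymm : ∀ s s' : Finset α,
        convexHull ℝ (ψ '' ↑s) ∩ convexHull ℝ (ψ '' ↑s') = convexHull ℝ (ψ '' ↑(s ∩ s')) →
        convexHull ℝ (ψ '' ↑s') ∩ convexHull ℝ (ψ '' ↑s) = convexHull ℝ (ψ '' ↑(s' ∩ s)) := by
      intro s s' h
      rw [Set.inter_comm, Finset.inter_comm]
      exact h
    have hmixed : ∀ e e' : Finset α, (e ∈ E ∨ e = ∅) → (e' ∈ E ∨ e' = ∅) →
        convexHull ℝ (ψ '' ↑(insert a e)) ∩ convexHull ℝ (ψ '' ↑(insert b e'))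
          = convexHull ℝ (ψ '' ↑((insert a e) ∩ (insert b e'))) := by
      intro e e' he he'
      have hae' : a ∉ e' := fun h => ha (hEV e' he' h)
      have hbe : b ∉ e := fun h => hb (hEV e he h)
      rw [fid3 hab hae' hbe, Finset.coe_insert, Set.image_insert_eq,
        Finset.coe_insert, Set.image_insert_eq]
      refine cone_cone_mixed f ?_ ?_ (hker e (hEV e he)) (hker e' (hEV e' he'))
        (hbase e e' he he')
      · rw [hψa, hfA]; norm_num
      · rw [hψb, map_neg, hfA]; norm_num
    have hsame : ∀ c : α, c ∉ V → f (ψ c) ≠ 0 → ∀ e e' : Finset α,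
        (e ∈ E ∨ e = ∅) → (e' ∈ E ∨ e' = ∅) →
        convexHull ℝ (ψ '' ↑(insert c e)) ∩ convexHull ℝ (ψ '' ↑(insert c e'))
          = convexHull ℝ (ψ '' ↑((insert c e) ∩ (insert c e'))) := by
      intro c hc hfc e e' he he'
      rw [fid2, Finset.coe_insert, Set.image_insert_eq, Finset.coe_insert, Set.image_insert_eq,
        Finset.coe_insert, Set.image_insert_eq]
      exact cone_cone_same f hfc (hker e (hEV e he)) (hker e' (hEV e' he'))
        (hbase e e' he he')
    have hfψa : f (ψ a) ≠ 0 := by rw [hψa, hfA]; norm_num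
    have hfψb : f (ψ b) ≠ 0 := by rw [hψb, map_neg, hfA]; norm_num
    intro s hs s' hs'
    rcases joinTwo_shape hs with hsE | ⟨c, e, hc, he, rfl⟩
    · rcases joinTwo_shape hs' with hsE' | ⟨c', e', hc', he', rfl⟩
      · exact hbase s s' (Or.inl hsE) (Or.inl hsE')
      · have hcV' : c' ∉ V := by rcases hc' with rfl | rfl; exacts [ha, hb]
        have hfc' : f (ψ c') ≠ 0 := by rcases hc' with rfl | rfl; exacts [hfψa, hfψb]
        exact hsymm _ _ (hconeflat c' hcV' hfc' e' s he' hsE)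
    · have hcV : c ∉ V := by rcases hc with rfl | rfl; exacts [ha, hb]
      have hfc : f (ψ c) ≠ 0 := by rcases hc with rfl | rfl; exacts [hfψa, hfψb]
      rcases joinTwo_shape hs' with hsE' | ⟨c', e', hc', he', rfl⟩
      · exact hconeflat c hcV hfc e s' he hsE'
      · rcases hc with hc | hc <;> rcases hc' with hc' | hc' <;> rw [hc, hc']
        · exact hsame a ha hfψa e e' he he'
        · exact hmixed e e' he he'
        · exact hsymm _ _ (hmixed e' e he' he)
        · exact hsame b hb hfψb e e' he he'
end forward
section reverse

set_option maxHeartbeats 1600000 in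
lemma reverse_dir {α : Type*} [DecidableEq α] {d : ℕ} (V : Finset α)
    (E : Finset (Finset α)) (hC : IsComplex E) (hV : ∀ e ∈ E, e ⊆ V)
    (a b : α) (ha : a ∉ V) (hb : b ∉ V) (hab : a ≠ b)
    (ψ : α → (Fin (d + 1) → ℝ)) (hψ : IsGeomEmbedding (joinTwo E a b) ψ) :
    ∃ φ : α → (Fin d → ℝ), IsGeomEmbedding E φ := by
  classical
  obtain ⟨hind, hint⟩ := hψ
  set A : Fin (d + 1) → ℝ := ψ a with hA
  set B : Fin (d + 1) → ℝ := ψ b with hB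
  set u : Fin (d + 1) → ℝ := A - B with hu
  -- A ≠ B
  have hsing : ∀ c : α, ψ '' (({c} : Finset α) : Set α) = {ψ c} := by
    intro c; rw [Finset.coe_singleton, Set.image_singleton]
  have hABne : A ≠ B := by
    intro h
    have h1 := hint {a} joinTwo_mem_sa {b} joinTwo_mem_sb
    have hab' : ({a} : Finset α) ∩ {b} = ∅ := by
      rw [Finset.singleton_inter_of_notMem]
      simp [hab]
    rw [hab', Finset.coe_empty, Set.image_empty, convexHull_empty, hsing a, hsing b,
      convexHull_singleton, convexHull_singleton] at h1
    have : A ∈ ({A} : Set _) ∩ {B} := ⟨rfl, by rw [h]; exact rfl⟩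
    rw [h1] at this
    exact absurd this (Set.notMem_empty _)
  have hune : u ≠ 0 := sub_ne_zero.mpr hABne
  obtain ⟨i0, hi0⟩ : ∃ i, u i ≠ 0 := by
    by_contra h
    push_neg at h
    exact hune (funext h)
  set g : (Fin (d + 1) → ℝ) →ₗ[ℝ] ℝ := (u i0)⁻¹ • LinearMap.proj i0 with hg
  have hgu : g u = 1 := by
    simp [hg, LinearMap.proj]
    exact inv_mul_cancel₀ hi0
  set T : (Fin (d + 1) → ℝ) →ₗ[ℝ] (Fin (d + 1) → ℝ) := LinearMap.id - g.smulRight u with hT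
  have happ : ∀ r, T r = r - g r • u := by
    intro r
    rw [hT, LinearMap.sub_apply, LinearMap.id_apply, LinearMap.smulRight_apply]
  have hTmem : ∀ p, T p ∈ LinearMap.ker g := by
    intro p
    rw [LinearMap.mem_ker, happ, map_sub, map_smul, hgu, smul_eq_mul, mul_one, sub_self]
  have hgsurj : Function.Surjective g := by
    intro r
    exact ⟨r • u, by rw [map_smul, hgu, smul_eq_mul, mul_one]⟩
  have hrank : Module.finrank ℝ (LinearMap.ker g) = d := by
    have h1 := LinearMap.finrank_range_add_finrank_ker g
    rw [LinearMap.range_eq_top.mpr hgsurj] at h1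
    rw [finrank_top, Module.finrank_self, Module.finrank_fin_fun] at h1
    omega
  have hrank' : Module.finrank ℝ (LinearMap.ker g) = Module.finrank ℝ (Fin d → ℝ) := by
    rw [hrank, Module.finrank_fin_fun]
  obtain ⟨eqv⟩ : Nonempty ((LinearMap.ker g) ≃ₗ[ℝ] (Fin d → ℝ)) :=
    ⟨LinearEquiv.ofFinrankEq _ _ hrank'⟩
  set F : (Fin (d + 1) → ℝ) →ₗ[ℝ] (Fin d → ℝ) :=
    eqv.toLinearMap ∘ₗ LinearMap.codRestrict (LinearMap.ker g) T hTmem with hF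
  have hFval : ∀ p, F p = eqv ⟨T p, hTmem p⟩ := fun p => rfl
  have hFeq : ∀ p q, F p = F q ↔ ∃ c : ℝ, q = p + c • u := by
    intro p q
    constructor
    · intro h
      rw [hFval, hFval] at h
      have hT' : T p = T q := Subtype.ext_iff.mp (eqv.injective h)
      have hT2 : p - g p • u = q - g q • u := by
        rw [happ, happ] at hT'
        exact hT'
      refine ⟨g q - g p, ?_⟩
      linear_combination (norm := module) -hT2
    · rintro ⟨c, rfl⟩
      have hFu : F u = 0 := by
        rw [hFval]
        have hTu : T u = 0 := by
          rw [happ, hgu, one_smul, sub_self]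
        rw [show (⟨T u, hTmem u⟩ : LinearMap.ker g) = 0 from Subtype.ext hTu]
        exact eqv.map_zero
      rw [map_add, map_smul, hFu, smul_zero, add_zero]
  -- memberships
  have haE : ∀ e ∈ E, e ∈ joinTwo E a b := fun e he => joinTwo_mem_left he
  -- apex not in affine span
  have hanotV : ∀ e ∈ E, a ∉ e := fun e he h => ha (hV e he h)
  have hbnotV : ∀ e ∈ E, b ∉ e := fun e he h => hb (hV e he h)
  have apex : ∀ (c : α), (∀ e ∈ E, c ∉ e) → (∀ e ∈ E, insert c e ∈ joinTwo E a b) →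
      ∀ e ∈ E, ψ c ∉ affineSpan ℝ (ψ '' (e : Set α)) := by
    intro c hce hcmem e he
    have hind' := hind _ (hcmem e he)
    have hc : c ∈ insert c e := Finset.mem_insert_self c e
    have himg : ((fun v : ↥(insert c e) => ψ ↑v) '' (Set.univ \ {⟨c, hc⟩})) = ψ '' ↑e := by
      ext p
      constructor
      · rintro ⟨j, ⟨-, hj⟩, rfl⟩
        have hjc : (j : α) ≠ c := by
          intro h
          exact hj (Subtype.ext h)
        have : (j : α) ∈ e := by
          rcases Finset.mem_insert.mp j.2 with h | h
          · exact absurd h hjc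
          · exact h
        exact ⟨j, this, rfl⟩
      · rintro ⟨v, hv, rfl⟩
        refine ⟨⟨v, Finset.mem_insert_of_mem hv⟩, ⟨Set.mem_univ _, ?_⟩, rfl⟩
        intro h
        have : v = c := congrArg Subtype.val h
        exact hce e he (this ▸ hv)
    have := hind'.notMem_affineSpan_diff ⟨c, hc⟩ Set.univ
    rwa [himg] at this
  have apexa : ∀ e ∈ E, ψ a ∉ affineSpan ℝ (ψ '' (e : Set α)) :=
    apex a hanotV (fun e he => joinTwo_mem_inserta he)
  -- intersection of the two cones over e is conv e
  have hconesinter : ∀ e ∈ E, ∀ e' ∈ E,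
      convexHull ℝ (ψ '' ((insert a e : Finset α) : Set α)) ∩
        convexHull ℝ (ψ '' ((insert b e' : Finset α) : Set α)) =
        convexHull ℝ (ψ '' ((e ∩ e' : Finset α) : Set α)) := by
    intro e he e' he'
    have h1 := hint _ (joinTwo_mem_inserta he) _ (joinTwo_mem_insertb he')
    rwa [fid3 hab (fun h => ha (hV e' he' h)) (fun h => hb (hV e he h))] at h1
  -- key geometric lemma: u is not a direction within any e
  have keyNoDir : ∀ e ∈ E, ∀ c : α → ℝ, ∑ v ∈ e, c v = 0 → ∑ v ∈ e, c v • ψ v = u → False := by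
    intro e he c hc0 hcu
    obtain ⟨v0, hv0⟩ := hC.1 e he
    have hncard : 0 < e.card := Finset.card_pos.mpr ⟨v0, hv0⟩
    set n : ℝ := (e.card : ℝ) with hn
    have hnpos : 0 < n := by rw [hn]; exact_mod_cast hncard
    set M : ℝ := (∑ v ∈ e, |c v|) + 1 with hM
    have hMpos : 0 < M := by
      have h' : 0 ≤ ∑ v ∈ e, |c v| := Finset.sum_nonneg (fun v _ => abs_nonneg _)
      rw [hM]; linarith
    have hcM : ∀ v ∈ e, |c v| < M := by
      intro v hv
      have := Finset.single_le_sum (f := fun v => |c v|) (fun w _ => abs_nonneg _) hv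
      rw [hM]; linarith
    set t : ℝ := 1 / (1 + n * M) with ht
    have hden : 0 < 1 + n * M := by nlinarith [mul_pos hnpos hMpos]
    have htpos : 0 < t := by rw [ht]; exact div_pos one_pos hden
    have htlt : t < 1 := by
      rw [ht, div_lt_one hden]
      nlinarith [mul_pos hnpos hMpos]
    have h1t : 1 - t = n * M * t := by
      have hden' : 1 + n * M ≠ 0 := ne_of_gt hden
      rw [ht]
      field_simp
      ring
    set x : Fin (d + 1) → ℝ := (n⁻¹ • ∑ v ∈ e, ψ v) with hx
    have hxmem : x ∈ convexHull ℝ (ψ '' (e : Set α)) := by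
      have := Finset.centerMass_mem_convexHull e (w := fun _ => (1 : ℝ))
        (fun v _ => zero_le_one) (by rw [Finset.sum_const, nsmul_eq_mul, mul_one]; exact hnpos)
        (z := ψ) (fun v hv => Set.mem_image_of_mem ψ hv)
      rwa [Finset.centerMass, Finset.sum_const, nsmul_eq_mul, mul_one,
        show ∀ s : Finset α, (∑ v ∈ s, (1 : ℝ) • ψ v) = ∑ v ∈ s, ψ v from
          fun s => Finset.sum_congr rfl (fun v _ => one_smul _ _)] at this
    set pt : Fin (d + 1) → ℝ := t • A + (1 - t) • x with hpt
    have hptA : pt ∈ convexHull ℝ (ψ '' ((insert a e : Finset α) : Set α)) := by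
      rw [Finset.coe_insert, Set.image_insert_eq]
      exact mem_cone_intro hxmem (le_of_lt htpos) (le_of_lt htlt)
    -- pt as combination over insert b e
    set wt : α → ℝ := fun v => if v = b then t else (1 - t) / n + t * c v with hwt
    have hbe : b ∉ e := hbnotV e he
    have hwt_nonneg : ∀ v ∈ insert b e, 0 ≤ wt v := by
      intro v hv
      rcases Finset.mem_insert.mp hv with rfl | hv'
      · rw [hwt]; simp [le_of_lt htpos]
      · have hvb : v ≠ b := fun h => hbe (h ▸ hv')
        rw [hwt]
        simp only [hvb, if_false]
        have h1 : (1 - t) / n = M * t := by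
          rw [h1t]; field_simp
        have h2 : |c v| < M := hcM v hv'
        have := neg_abs_le (c v)
        rw [h1]
        nlinarith
    have hwt_sum : ∑ v ∈ insert b e, wt v = 1 := by
      rw [Finset.sum_insert hbe]
      have : ∀ v ∈ e, wt v = (1 - t) / n + t * c v := by
        intro v hv
        have hvb : v ≠ b := fun h => hbe (h ▸ hv)
        rw [hwt]; simp [hvb]
      rw [Finset.sum_congr rfl this, Finset.sum_add_distrib, Finset.sum_const,
        ← Finset.mul_sum, hc0, mul_zero, add_zero, nsmul_eq_mul]
      rw [hwt]; simp only [if_pos rfl]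
      field_simp
      simp only [if_true, ← hn]
      ring
    have hwt_comb : ∑ v ∈ insert b e, wt v • ψ v = pt := by
      rw [Finset.sum_insert hbe]
      have hcongr : ∀ v ∈ e, wt v • ψ v = ((1 - t) / n) • ψ v + (t * c v) • ψ v := by
        intro v hv
        have hvb : v ≠ b := fun h => hbe (h ▸ hv)
        rw [hwt]
        simp only [hvb, if_false]
        rw [← add_smul]
      rw [Finset.sum_congr rfl hcongr, Finset.sum_add_distrib]
      have e1 : ∑ v ∈ e, ((1 - t) / n) • ψ v = (1 - t) • x := by
        rw [hx, ← Finset.smul_sum, smul_smul, div_eq_mul_inv]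
      have e2 : ∑ v ∈ e, (t * c v) • ψ v = t • u := by
        rw [← hcu, Finset.smul_sum]
        exact Finset.sum_congr rfl (fun v _ => by rw [smul_smul])
      rw [e1, e2]
      have : wt b = t := by rw [hwt]; simp
      rw [this, hpt, hu]
      module
    have hptB : pt ∈ convexHull ℝ (ψ '' ((insert b e : Finset α) : Set α)) := by
      have := Finset.centerMass_mem_convexHull (insert b e) (w := wt) hwt_nonneg
        (by rw [hwt_sum]; norm_num) (z := ψ)
        (fun v hv => Set.mem_image_of_mem ψ hv)
      rwa [Finset.centerMass, hwt_sum, inv_one, one_smul, hwt_comb] at this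
    have hpte : pt ∈ convexHull ℝ (ψ '' ((e : Finset α) : Set α)) := by
      have h1 := hconesinter e he e he
      rw [Finset.inter_self] at h1
      rw [← h1]
      exact ⟨hptA, hptB⟩
    have hxspan : x ∈ affineSpan ℝ (ψ '' (e : Set α)) :=
      convexHull_subset_affineSpan _ hxmem
    have hptspan : pt ∈ affineSpan ℝ (ψ '' (e : Set α)) :=
      convexHull_subset_affineSpan _ hpte
    have hAeq : t⁻¹ • (pt -ᵥ x) +ᵥ x = A := by
      rw [vsub_eq_sub, vadd_eq_add, hpt]
      have h2 : t • A + (1 - t) • x - x = t • (A - x) := by module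
      rw [h2, smul_smul, inv_mul_cancel₀ (ne_of_gt htpos), one_smul, sub_add_cancel]
    have hmem := (affineSpan ℝ (ψ '' (e : Set α))).smul_vsub_vadd_mem t⁻¹ hptspan hxspan hxspan
    rw [hAeq] at hmem
    exact apexa e he hmem
  -- no positive shift along u between two hulls
  have noShift : ∀ e ∈ E, ∀ e' ∈ E, ∀ x y : Fin (d + 1) → ℝ,
      x ∈ convexHull ℝ (ψ '' (e : Set α)) → y ∈ convexHull ℝ (ψ '' (e' : Set α)) →
      ∀ c : ℝ, 0 < c → y = x + c • u → False := by
    intro e he e' he' x y hx hy c hcpos hyx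
    set μ : ℝ := c / (1 + c) with hμ
    have hc1 : 0 < 1 + c := by linarith
    have hμpos : 0 < μ := by positivity
    have hμ0 : 0 ≤ μ := le_of_lt hμpos
    have hμ1 : μ < 1 := by rw [hμ, div_lt_one hc1]; linarith
    set z := μ • A + (1 - μ) • x with hz
    have hzA : z ∈ convexHull ℝ (ψ '' ((insert a e : Finset α) : Set α)) := by
      rw [Finset.coe_insert, Set.image_insert_eq]
      exact mem_cone_intro hx hμ0 (le_of_lt hμ1)
    have h1μ : (1 - μ) * c = μ := by
      rw [hμ]
      field_simp
      ring
    have hzB : z = μ • B + (1 - μ) • y := by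
      rw [hz, hyx, hu]
      calc μ • A + (1 - μ) • x
          = μ • B + μ • (A - B) + (1 - μ) • x := by module
        _ = μ • B + ((1 - μ) * c) • (A - B) + (1 - μ) • x := by rw [h1μ]
        _ = μ • B + (1 - μ) • (x + c • (A - B)) := by module
    have hzB' : z ∈ convexHull ℝ (ψ '' ((insert b e' : Finset α) : Set α)) := by
      rw [Finset.coe_insert, Set.image_insert_eq, hzB]
      exact mem_cone_intro hy hμ0 (le_of_lt hμ1)
    have hzinter : z ∈ convexHull ℝ (ψ '' ((e ∩ e' : Finset α) : Set α)) := by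
      rw [← hconesinter e he e' he']
      exact ⟨hzA, hzB'⟩
    have hze : z ∈ convexHull ℝ (ψ '' (e : Set α)) :=
      convexHull_mono (Set.image_mono (Finset.coe_subset.mpr Finset.inter_subset_left)) hzinter
    have hxspan : x ∈ affineSpan ℝ (ψ '' (e : Set α)) := convexHull_subset_affineSpan _ hx
    have hzspan : z ∈ affineSpan ℝ (ψ '' (e : Set α)) := convexHull_subset_affineSpan _ hze
    have hAeq : μ⁻¹ • (z -ᵥ x) +ᵥ x = A := by
      rw [vsub_eq_sub, vadd_eq_add, hz]
      have h2 : μ • A + (1 - μ) • x - x = μ • (A - x) := by module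
      rw [h2, smul_smul, inv_mul_cancel₀ (ne_of_gt hμpos), one_smul, sub_add_cancel]
    have hmem := (affineSpan ℝ (ψ '' (e : Set α))).smul_vsub_vadd_mem μ⁻¹ hzspan hxspan hxspan
    rw [hAeq] at hmem
    exact apexa e he hmem
  -- the embedding
  refine ⟨fun v => F (ψ v), ?_, ?_⟩
  · intro e he
    refine (affInd_finset_iff (fun v => F (ψ v)) e).mpr ?_
    intro w h0 h1
    have hFsum : F (∑ v ∈ e, w v • ψ v) = F 0 := by
      rw [map_zero, map_sum]
      rw [← h1]
      exact Finset.sum_congr rfl (fun v _ => by rw [map_smul])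
    obtain ⟨c, hc⟩ := (hFeq _ _).mp hFsum
    rcases eq_or_ne c 0 with rfl | hcne
    · have hzero : ∑ v ∈ e, w v • ψ v = 0 := by
        rw [zero_smul, add_zero] at hc
        exact hc.symm
      exact (affInd_finset_iff ψ e).mp (hind e (haE e he)) w h0 hzero
    · exfalso
      have hS : ∑ v ∈ e, w v • ψ v = (-c) • u := by
        have : (0 : Fin (d + 1) → ℝ) - c • u = ∑ v ∈ e, w v • ψ v := by
          rw [hc]; abel
        rw [← this]
        module
      have hcne' : (-c : ℝ) ≠ 0 := neg_ne_zero.mpr hcne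
      refine keyNoDir e he (fun v => (-c)⁻¹ * w v) ?_ ?_
      · rw [← Finset.mul_sum, h0, mul_zero]
      · rw [show (∑ v ∈ e, ((-c)⁻¹ * w v) • ψ v) = (-c)⁻¹ • ∑ v ∈ e, w v • ψ v from ?_, hS,
          smul_smul, inv_mul_cancel₀ hcne', one_smul]
        rw [Finset.smul_sum]
        exact Finset.sum_congr rfl (fun v _ => by rw [smul_smul])
  · intro e he e' he'
    have himgφ : ∀ s : Finset α, (fun v => F (ψ v)) '' (s : Set α) = F '' (ψ '' (s : Set α)) :=
      fun s => (Set.image_image F ψ (s : Set α)).symm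
    rw [himgφ, himgφ, himgφ, ← LinearMap.image_convexHull, ← LinearMap.image_convexHull,
      ← LinearMap.image_convexHull]
    apply Set.Subset.antisymm
    · rintro p ⟨⟨x, hx, rfl⟩, ⟨y, hy, hFyx⟩⟩
      obtain ⟨c, hc⟩ := (hFeq y x).mp hFyx
      rcases lt_trichotomy c 0 with hneg | hzero | hpos
      · exfalso
        refine noShift e he e' he' x y hx hy (-c) (by linarith) ?_
        rw [hc]
        module
      · subst hzero
        rw [zero_smul, add_zero] at hc
        have hxe : x ∈ convexHull ℝ (ψ '' ((e ∩ e' : Finset α) : Set α)) := by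
          rw [← hint e (haE e he) e' (haE e' he')]
          exact ⟨hx, by rw [hc]; exact hy⟩
        exact Set.mem_image_of_mem F hxe
      · exact absurd hc (by
          intro hc
          exact noShift e' he' e he y x hy hx c hpos hc)
    · refine Set.subset_inter ?_ ?_ <;> apply Set.image_mono <;> apply convexHull_mono <;>
        apply Set.image_mono
      · exact Finset.coe_subset.mpr Finset.inter_subset_left
      · exact Finset.coe_subset.mpr Finset.inter_subset_right
end reverse

/-- `C` geometrically embeds in ℝ^d if and only if the join complex
`C⁺ = C * {a, b}` geometrically embeds in ℝ^(d+1). -/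
theorem stmt2 {α : Type*} [DecidableEq α] {d : ℕ} (V : Finset α)
    (E : Finset (Finset α)) (hC : IsComplex E) (hV : ∀ e ∈ E, e ⊆ V)
    (a b : α) (ha : a ∉ V) (hb : b ∉ V) (hab : a ≠ b) :
    (∃ φ : α → (Fin d → ℝ), IsGeomEmbedding E φ) ↔
      (∃ ψ : α → (Fin (d + 1) → ℝ), IsGeomEmbedding (joinTwo E a b) ψ) := by
  constructor
  · rintro ⟨φ, hφ⟩
    exact forward_dir V E hC hV a b ha hb hab φ hφ
  · rintro ⟨ψ, hψ⟩
    exact reverse_dir V E hC hV a b ha hb hab ψ hψ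
end

section
/- Let φ be a geometric embedding of the join complex C⁺ = C * {a, b} in ℝ^{d+1} such that φ(a) − φ(b) is parallel to the (d+1)-st coordinate axis. Then the restriction of the projection (x₁,…,x_{d+1}) ↦ (x₁,…,x_d) to the set ∪_{e∈E} conv(φ(e)) is injective. -/
/-- Key lemma: if the apex `a` sits strictly above apex `b` (in the last
coordinate) and `p` sits strictly above `q` with the same projection, we get
a contradiction. -/
lemma key_lemma {α : Type*} [DecidableEq α] {d : ℕ} (V : Finset α)
    (E H : Finset (Finset α)) (hV : ∀ e ∈ E, e ⊆ V)
    (a b : α) (ha : a ∉ V) (hb : b ∉ V) (hab : a ≠ b)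
    (φ : α → (Fin (d + 1) → ℝ)) (hφ : IsGeomEmbedding H φ)
    (hmem : ∀ e ∈ E, insert a e ∈ H ∧ insert b e ∈ H)
    (hpar : ∀ i : Fin d, φ a i.castSucc = φ b i.castSucc)
    (ep eq' : Finset α) (hep : ep ∈ E) (heq : eq' ∈ E)
    (p q : Fin (d + 1) → ℝ)
    (hp : p ∈ convexHull ℝ (φ '' (ep : Set α)))
    (hq : q ∈ convexHull ℝ (φ '' (eq' : Set α)))
    (hproj : ∀ i : Fin d, p i.castSucc = q i.castSucc)
    (hAB : φ b (Fin.last d) < φ a (Fin.last d))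
    (hpq : q (Fin.last d) < p (Fin.last d)) : False := by
  set A : ℝ := φ a (Fin.last d) with hA
  set B : ℝ := φ b (Fin.last d) with hB
  set u : ℝ := A - B with hu
  set v : ℝ := p (Fin.last d) - q (Fin.last d) with hv
  have hu0 : 0 < u := by simp [hu]; linarith
  have hv0 : 0 < v := by simp [hv]; linarith
  set t : ℝ := u / (u + v) with ht
  have huv : 0 < u + v := by linarith
  have ht0 : 0 < t := div_pos hu0 huv
  have ht1 : t < 1 := by
    rw [ht, div_lt_one huv]; linarith
  set x : Fin (d + 1) → ℝ := (1 - t) • φ a + t • q with hx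
  set y : Fin (d + 1) → ℝ := (1 - t) • φ b + t • p with hy
  -- x = y
  have hxy : x = y := by
    funext i
    refine Fin.lastCases ?_ ?_ i
    · have h1 : x (Fin.last d) = (1 - t) * A + t * q (Fin.last d) := by
        simp [hx, hA]
      have h2 : y (Fin.last d) = (1 - t) * B + t * p (Fin.last d) := by
        simp [hy, hB]
      rw [h1, h2]
      have hteq : t * (u + v) = u := by
        rw [ht]; field_simp
      have : A = B + u := by rw [hu]; ring
      have hpv : p (Fin.last d) = q (Fin.last d) + v := by rw [hv]; ring
      rw [this, hpv]
      nlinarith [hteq]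
    · intro j
      have h1 : x j.castSucc = (1 - t) * φ a j.castSucc + t * q j.castSucc := by
        simp [hx]
      have h2 : y j.castSucc = (1 - t) * φ b j.castSucc + t * p j.castSucc := by
        simp [hy]
      rw [h1, h2, hpar j, hproj j]
  obtain ⟨haH, hbH⟩ := hmem ep hep
  obtain ⟨haqH, hbqH⟩ := hmem eq' heq
  -- x ∈ conv (φ '' insert a eq')
  have hsub_aq : (φ '' (eq' : Set α)) ⊆ φ '' ((insert a eq' : Finset α) : Set α) := by
    apply Set.image_mono
    intro z hz
    simp_all
  have hxmem : x ∈ convexHull ℝ (φ '' ((insert a eq' : Finset α) : Set α)) := by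
    have haMem : φ a ∈ convexHull ℝ (φ '' ((insert a eq' : Finset α) : Set α)) :=
      subset_convexHull ℝ _ ⟨a, by simp, rfl⟩
    have hqMem : q ∈ convexHull ℝ (φ '' ((insert a eq' : Finset α) : Set α)) :=
      convexHull_mono hsub_aq hq
    exact (convex_convexHull ℝ _) haMem hqMem (by linarith) (le_of_lt ht0) (by ring)
  have hymem : y ∈ convexHull ℝ (φ '' ((insert b ep : Finset α) : Set α)) := by
    have hbMem : φ b ∈ convexHull ℝ (φ '' ((insert b ep : Finset α) : Set α)) :=
      subset_convexHull ℝ _ ⟨b, by simp, rfl⟩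
    have hpMem : p ∈ convexHull ℝ (φ '' ((insert b ep : Finset α) : Set α)) := by
      refine convexHull_mono ?_ hp
      apply Set.image_mono
      intro z hz; simp_all
    exact (convex_convexHull ℝ _) hbMem hpMem (by linarith) (le_of_lt ht0) (by ring)
  -- intersection of the two hulls
  have hinter := hφ.2 _ haqH _ hbH
  have hcap : (insert a eq' ∩ insert b ep : Finset α) = eq' ∩ ep := by
    ext z
    simp only [Finset.mem_inter, Finset.mem_insert]
    constructor
    · rintro ⟨hz1 | hz1, hz2 | hz2⟩
      · exfalso; subst hz1; exact hab hz2
      · exfalso; subst hz1; exact ha (hV ep hep hz2)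
      · exfalso; subst hz2; exact hb (hV eq' heq hz1)
      · exact ⟨hz1, hz2⟩
    · rintro ⟨hz1, hz2⟩; exact ⟨Or.inr hz1, Or.inr hz2⟩
  have hxcap : x ∈ convexHull ℝ (φ '' ((eq' ∩ ep : Finset α) : Set α)) := by
    rw [← hcap, ← hinter]
    exact ⟨hxmem, hxy ▸ hymem⟩
  have hxq : x ∈ convexHull ℝ (φ '' (eq' : Set α)) := by
    refine convexHull_mono ?_ hxcap
    apply Set.image_mono
    intro z hz
    simp only [Finset.coe_inter, Set.mem_inter_iff] at hz
    exact hz.1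
  -- now φ a ∈ affineSpan of φ '' eq', contradiction with affine independence
  have hxspan : x ∈ affineSpan ℝ (φ '' (eq' : Set α)) :=
    convexHull_subset_affineSpan _ hxq
  have hqspan : q ∈ affineSpan ℝ (φ '' (eq' : Set α)) :=
    convexHull_subset_affineSpan _ hq
  have haspan : φ a ∈ affineSpan ℝ (φ '' (eq' : Set α)) := by
    have h1t : (1 : ℝ) - t ≠ 0 := by linarith
    have heqa' : ∀ i, φ a i = t / (1 - t) * (x i - q i) + x i := by
      intro i
      have hxi : x i = (1 - t) * φ a i + t * q i := by simp [hx]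
      rw [hxi]
      field_simp
      ring
    have heqa : φ a = (t / (1 - t)) • (x -ᵥ q) +ᵥ x := by
      funext i
      simpa [vsub_eq_sub, vadd_eq_add] using heqa' i
    rw [heqa]
    exact AffineSubspace.smul_vsub_vadd_mem _ _ hxspan hqspan hxspan
  have hindep := hφ.1 _ haqH
  have hnot := hindep.notMem_affineSpan_diff
    ⟨a, by simp⟩ Set.univ
  apply hnot
  refine affineSpan_mono ℝ ?_ haspan
  rintro z ⟨w, hw, rfl⟩
  have hw' : w ∈ eq' := hw
  have hwa : w ≠ a := fun h => ha (hV eq' heq (h ▸ hw'))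
  exact ⟨⟨w, Finset.mem_insert.mpr (Or.inr hw')⟩, ⟨trivial, by simp [hwa]⟩, rfl⟩

/-- If `φ` is a geometric embedding of the join complex `C⁺ = C * {a, b}` in
ℝ^(d+1) such that `φ a - φ b` is parallel to the last coordinate axis (i.e.,
`φ a` and `φ b` agree in the first `d` coordinates), then the projection onto
the first `d` coordinates is injective on `⋃ e ∈ E, conv (φ '' e)`. -/
theorem stmt3 {α : Type*} [DecidableEq α] {d : ℕ} (V : Finset α)
    (E : Finset (Finset α)) (hC : IsComplex E) (hV : ∀ e ∈ E, e ⊆ V)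
    (a b : α) (ha : a ∉ V) (hb : b ∉ V) (hab : a ≠ b)
    (φ : α → (Fin (d + 1) → ℝ)) (hφ : IsGeomEmbedding (joinTwo E a b) φ)
    (hpar : ∀ i : Fin d, φ a i.castSucc = φ b i.castSucc) :
    Set.InjOn (fun (x : Fin (d + 1) → ℝ) (i : Fin d) => x i.castSucc)
      (⋃ e ∈ E, convexHull ℝ (φ '' (e : Set α))) := by
  have hmem : ∀ e ∈ E, insert a e ∈ joinTwo E a b ∧ insert b e ∈ joinTwo E a b := by
    intro e he
    constructor
    · exact Finset.mem_union_left _ (Finset.mem_union_left _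
        (Finset.mem_union_right _ (Finset.mem_image_of_mem _ he)))
    · exact Finset.mem_union_left _
        (Finset.mem_union_right _ (Finset.mem_image_of_mem _ he))
  have haH : ({a} : Finset α) ∈ joinTwo E a b := by simp [joinTwo]
  have hbH : ({b} : Finset α) ∈ joinTwo E a b := by simp [joinTwo]
  -- φ a ≠ φ b
  have hfab : φ a (Fin.last d) ≠ φ b (Fin.last d) := by
    intro hEq
    have hab' : φ a = φ b := by
      funext i
      refine Fin.lastCases hEq (fun j => hpar j) i
    have := hφ.2 _ haH _ hbH
    have hcap : ({a} ∩ {b} : Finset α) = ∅ := by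
      ext z; simp only [Finset.mem_inter, Finset.mem_singleton, Finset.notMem_empty,
        iff_false]
      rintro ⟨rfl, rfl⟩; exact hab rfl
    rw [hcap] at this
    have hmem' : φ a ∈ convexHull ℝ (φ '' (({a} : Finset α) : Set α)) ∩
        convexHull ℝ (φ '' (({b} : Finset α) : Set α)) := by
      constructor
      · exact subset_convexHull ℝ _ ⟨a, by simp, rfl⟩
      · rw [hab']; exact subset_convexHull ℝ _ ⟨b, by simp, rfl⟩
    rw [this] at hmem'
    simp at hmem'
  intro p hp q hq hproj
  simp only [Set.mem_iUnion] at hp hq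
  obtain ⟨ep, hep, hpmem⟩ := hp
  obtain ⟨eq', heq, hqmem⟩ := hq
  have hproj' : ∀ i : Fin d, p i.castSucc = q i.castSucc := fun i =>
    congrFun hproj i
  by_contra hne
  have hlast : p (Fin.last d) ≠ q (Fin.last d) := by
    intro hEq
    apply hne
    funext i
    exact Fin.lastCases hEq (fun j => hproj' j) i
  have hpar' : ∀ i : Fin d, φ b i.castSucc = φ a i.castSucc := fun i => (hpar i).symm
  have hmem' : ∀ e ∈ E, insert b e ∈ joinTwo E a b ∧ insert a e ∈ joinTwo E a b :=
    fun e he => ⟨(hmem e he).2, (hmem e he).1⟩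
  rcases lt_or_gt_of_ne hfab with hAB | hAB
  · -- φ a < φ b at last coordinate; use b as upper apex
    rcases lt_or_gt_of_ne hlast with hpq | hpq
    · exact key_lemma V E (joinTwo E a b) hV b a hb ha hab.symm φ hφ hmem' hpar'
        eq' ep heq hep q p hqmem hpmem (fun i => (hproj' i).symm) hAB hpq
    · exact key_lemma V E (joinTwo E a b) hV b a hb ha hab.symm φ hφ hmem' hpar'
        ep eq' hep heq p q hpmem hqmem hproj' hAB hpq
  · rcases lt_or_gt_of_ne hlast with hpq | hpq
    · exact key_lemma V E (joinTwo E a b) hV a b ha hb hab φ hφ hmem hpar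
        eq' ep heq hep q p hqmem hpmem (fun i => (hproj' i).symm) hAB hpq
    · exact key_lemma V E (joinTwo E a b) hV a b ha hb hab φ hφ hmem hpar
        ep eq' hep heq p q hpmem hqmem hproj' hAB hpq
end

section
/- Every abstract simplicial k-complex on n vertices admits a geometric embedding in ℝ^{2k+1}. In particular, it suffices to place the vertices at n distinct points on the moment curve t ↦ (t, t², …, t^{2k+1}), since any 2k+2 points on the moment curve are affinely independent, and hence any two faces of dimension at most k intersect exactly in the convex hull of their common vertices. -/
open Polynomial Finset

/-- Rows of a (possibly rectangular, wide) Vandermonde-type family are linearly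
independent when the parameters are distinct and there are at most `n` of them. -/
lemma moment_linearIndependent {n : ℕ} {ι : Type*} [Fintype ι] (t : ι → ℝ)
    (hinj : Function.Injective t) (hcard : Fintype.card ι ≤ n) :
    LinearIndependent ℝ (fun v : ι => fun j : Fin n => t v ^ (j : ℕ)) := by
  classical
  rw [linearIndependent_iff']
  intro s g hsum v0 hv0
  have hcs : s.card ≤ n := le_trans (Finset.card_le_univ s) (by simpa using hcard)
  set Q : ℝ[X] := ∏ v ∈ s.erase v0, (X - C (t v)) with hQ
  have hdeg : Q.natDegree < n := by
    have : Q.natDegree = (s.erase v0).card := by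
      rw [hQ, Polynomial.natDegree_prod _ _ (fun v _ => Polynomial.X_sub_C_ne_zero (t v))]
      simp [Polynomial.natDegree_X_sub_C]
    rw [this, Finset.card_erase_of_mem hv0]
    have hpos : 0 < s.card := Finset.card_pos.mpr ⟨v0, hv0⟩
    omega
  have h1 : ∀ j : Fin n, ∑ v ∈ s, g v * t v ^ (j : ℕ) = 0 := by
    intro j
    have := congrFun hsum j
    simpa [Finset.sum_apply] using this
  have key : ∑ v ∈ s, g v * Q.eval (t v) = 0 := by
    have : ∀ v ∈ s, g v * Q.eval (t v)
        = ∑ j ∈ Finset.range n, Q.coeff j * (g v * t v ^ j) := by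
      intro v _
      rw [Polynomial.eval_eq_sum_range' hdeg, Finset.mul_sum]
      apply Finset.sum_congr rfl
      intro j _
      ring
    rw [Finset.sum_congr rfl this, Finset.sum_comm]
    apply Finset.sum_eq_zero
    intro j hj
    rw [← Finset.mul_sum]
    have := h1 ⟨j, Finset.mem_range.mp hj⟩
    simp only at this
    rw [this, mul_zero]
  have hzero : ∀ v ∈ s, v ≠ v0 → g v * Q.eval (t v) = 0 := by
    intro v hv hne
    have : Q.eval (t v) = 0 := by
      rw [hQ, Polynomial.eval_prod]
      apply Finset.prod_eq_zero (Finset.mem_erase.mpr ⟨hne, hv⟩)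
      simp
    rw [this, mul_zero]
  have hmain : g v0 * Q.eval (t v0) = 0 := by
    rw [← key, eq_comm]
    exact Finset.sum_eq_single_of_mem v0 hv0 hzero
  have hQne : Q.eval (t v0) ≠ 0 := by
    rw [hQ, Polynomial.eval_prod]
    apply Finset.prod_ne_zero_iff.mpr
    intro v hv
    have hne : v ≠ v0 := (Finset.mem_erase.mp hv).1
    simp only [Polynomial.eval_sub, Polynomial.eval_X, Polynomial.eval_C, sub_ne_zero]
    exact fun h => hne (hinj h).symm
  exact (mul_eq_zero.mp hmain).resolve_right hQne

/-- Points on the moment curve in ℝ^(2k+1) with distinct parameters, at most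
`2k+2` of them, are affinely independent. -/
lemma moment_affineIndependent {k : ℕ} {ι : Type*} [Fintype ι] (t : ι → ℝ)
    (hinj : Function.Injective t) (hcard : Fintype.card ι ≤ 2 * k + 2) :
    AffineIndependent ℝ (fun v : ι => fun j : Fin (2 * k + 1) => t v ^ ((j : ℕ) + 1)) := by
  rw [affineIndependent_iff]
  intro s w hw0 hwsum
  have hli := moment_linearIndependent (n := 2 * k + 2) t hinj hcard
  rw [linearIndependent_iff'] at hli
  intro v hv
  refine hli s w ?_ v hv
  funext j
  rw [Finset.sum_apply]
  rcases j with ⟨jv, hj⟩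
  match jv, hj with
  | 0, hj => simpa using hw0
  | (m+1), hj =>
    have hm : m < 2 * k + 1 := by omega
    have := congrFun hwsum ⟨m, hm⟩
    simpa [Finset.sum_apply] using this

/-- Every abstract simplicial k-complex (every hyperedge has at most k+1
vertices) admits a geometric embedding in ℝ^(2k+1). -/
theorem stmt6 {α : Type*} [Fintype α] [DecidableEq α] {k : ℕ}
    (E : Finset (Finset α)) (hC : IsComplex E)
    (hdim : ∀ e ∈ E, e.card ≤ k + 1) :
    ∃ φ : α → (Fin (2 * k + 1) → ℝ), IsGeomEmbedding E φ := by
  classical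
  set t : α → ℝ := fun v => ((Fintype.equivFin α v : ℕ) : ℝ) with ht
  have htinj : Function.Injective t := by
    intro a b hab
    have : (Fintype.equivFin α a : ℕ) = (Fintype.equivFin α b : ℕ) := Nat.cast_injective hab
    exact (Fintype.equivFin α).injective (Fin.val_injective this)
  set φ : α → (Fin (2 * k + 1) → ℝ) := fun v => fun j => t v ^ ((j : ℕ) + 1) with hφ
  have hφinj : Function.Injective φ := by
    intro a b hab
    have := congrFun hab ⟨0, by omega⟩
    simp only [hφ] at this
    norm_num at this
    exact htinj this
  refine ⟨φ, ?_, ?_⟩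
  · intro e he
    have hcard : Fintype.card ↥e ≤ 2 * k + 2 := by
      rw [Fintype.card_coe]
      have := hdim e he
      omega
    exact moment_affineIndependent (fun v : ↥e => t v)
      (fun a b hab => Subtype.ext (htinj hab)) hcard
  · intro e he e' he'
    -- affine independence of the union
    have hcard : Fintype.card ↥(e ∪ e') ≤ 2 * k + 2 := by
      rw [Fintype.card_coe]
      have h1 := hdim e he
      have h2 := hdim e' he'
      have := Finset.card_union_le e e'
      omega
    have hai : AffineIndependent ℝ (fun v : ↥(e ∪ e') => φ v) :=
      moment_affineIndependent (fun v : ↥(e ∪ e') => t v)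
        (fun a b hab => Subtype.ext (htinj hab)) hcard
    have hrange : AffineIndependent ℝ
        (fun x => x : Set.range (fun v : ↥(e ∪ e') => φ v) → (Fin (2 * k + 1) → ℝ)) :=
      hai.range
    have hset : Set.range (fun v : ↥(e ∪ e') => φ v)
        = (((e ∪ e').image φ : Finset (Fin (2 * k + 1) → ℝ)) : Set (Fin (2 * k + 1) → ℝ)) := by
      rw [Finset.coe_image]
      exact (Set.image_eq_range _ _).symm
    rw [hset] at hrange
    have key := hrange.convexHull_inter (t₁ := e.image φ) (t₂ := e'.image φ)
      (Finset.image_subset_image Finset.subset_union_left)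
      (Finset.image_subset_image Finset.subset_union_right)
    have himg : (e.image φ) ∩ (e'.image φ) = (e ∩ e').image φ :=
      (Finset.image_inter e e' hφinj).symm
    rw [← Finset.coe_inter, himg] at key
    simpa [Finset.coe_image] using key.symm
end

section
/- Any 2k+2 distinct points on the moment curve t ↦ (t, t², …, t^{2k+1}) in ℝ^{2k+1} are affinely independent, and moreover for any two disjoint subsets S, T of a point set on the moment curve with |S| + |T| ≤ 2k+2, the convex hulls conv(S) and conv(T) are disjoint. -/
/-- The moment curve `t ↦ (t, t², …, t^m)` in ℝ^m. -/
def momentCurve (m : ℕ) (t : ℝ) : Fin m → ℝ := fun i => t ^ ((i : ℕ) + 1)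

lemma momentCurve_injective (m : ℕ) (hm : 0 < m) : Function.Injective (momentCurve m) := by
  intro a b h
  have := congrFun h ⟨0, hm⟩
  simpa [momentCurve] using this

/-- Any m+1 distinct parameters give affinely independent points. -/
lemma momentCurve_affineIndependent (m : ℕ) (t : Fin (m + 1) → ℝ)
    (ht : Function.Injective t) :
    AffineIndependent ℝ (fun i => momentCurve m (t i)) := by
  rw [affineIndependent_iff_of_fintype]
  intro w hw hvsub
  rw [Finset.weightedVSub_eq_linear_combination _ hw] at hvsub
  have key : ∀ i : Fin (m + 1), ∑ j : Fin (m + 1), w j * t j ^ (i : ℕ) = 0 := by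
    intro i
    rcases Nat.eq_zero_or_pos (i : ℕ) with hi | hi
    · simpa [hi] using hw
    · obtain ⟨n, hn⟩ := Nat.exists_eq_add_of_lt hi
      have hnm : n < m := by omega
      have := congrFun hvsub ⟨n, hnm⟩
      simp only [momentCurve, Finset.sum_apply, Pi.smul_apply, Pi.zero_apply,
        smul_eq_mul] at this
      have hin : (i : ℕ) = n + 1 := by omega
      rw [hin]
      simpa using this
  have := Matrix.eq_zero_of_forall_pow_sum_mul_pow_eq_zero ht key
  exact fun i => congrFun this i

/-- Any finset of parameters of size at most m+1 gives affinely independent points. -/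
lemma momentCurve_affineIndependent_finset (m : ℕ) (S : Finset ℝ)
    (hS : S.card ≤ m + 1) :
    AffineIndependent ℝ (fun x : S => momentCurve m (x : ℝ)) := by
  obtain ⟨U, hSU, hU⟩ := Infinite.exists_superset_card_eq S (m + 1) hS
  set e : Fin (m + 1) ≃ U := (U.equivFinOfCardEq hU).symm
  have ht : Function.Injective (fun i : Fin (m + 1) => ((e i : ℝ))) :=
    Subtype.coe_injective.comp e.injective
  have hAI := momentCurve_affineIndependent m _ ht
  have hemb : Function.Injective (fun x : S => e.symm ⟨(x : ℝ), hSU x.2⟩) := by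
    intro a b h
    apply Subtype.coe_injective
    have := congrArg (fun y => ((e y : ℝ))) h
    simpa using this
  have := hAI.comp_embedding ⟨_, hemb⟩
  convert this using 1
  funext x
  simp

/-- Any 2k+2 distinct points on the moment curve in ℝ^(2k+1) are affinely
independent, and the convex hulls of the images of any two disjoint parameter
sets of total size at most 2k+2 are disjoint. -/
theorem stmt7 {k : ℕ} :
    (∀ t : Fin (2 * k + 2) → ℝ, Function.Injective t →
      AffineIndependent ℝ (fun i => momentCurve (2 * k + 1) (t i))) ∧
    (∀ S T : Finset ℝ, Disjoint S T → S.card + T.card ≤ 2 * k + 2 →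
      Disjoint (convexHull ℝ (momentCurve (2 * k + 1) '' (S : Set ℝ)))
        (convexHull ℝ (momentCurve (2 * k + 1) '' (T : Set ℝ)))) := by
  classical
  constructor
  · intro t ht
    exact momentCurve_affineIndependent (2 * k + 1) t ht
  · intro S T hST hcard
    set γ := momentCurve (2 * k + 1) with hγ
    have hγinj : Function.Injective γ := momentCurve_injective _ (by omega)
    set U : Finset ℝ := S ∪ T
    have hUcard : U.card ≤ 2 * k + 2 := le_trans (Finset.card_union_le S T) hcard
    have hAI : AffineIndependent ℝ (fun x : U => γ (x : ℝ)) :=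
      momentCurve_affineIndependent_finset (2 * k + 1) U hUcard
    have hAIinj : Function.Injective (fun x : U => γ (x : ℝ)) :=
      hγinj.comp Subtype.coe_injective
    have hrange : AffineIndependent ℝ ((↑) : Set.range (fun x : U => γ (x : ℝ)) → (Fin (2 * k + 1) → ℝ)) :=
      hAI.range
    have hrangeEq : Set.range (fun x : U => γ (x : ℝ)) = ((U.image γ : Finset (Fin (2*k+1) → ℝ)) : Set _) := by
      ext y
      simp [Set.range, Finset.mem_image]
    rw [hrangeEq] at hrange
    have h1 : S.image γ ⊆ U.image γ := Finset.image_subset_image Finset.subset_union_left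
    have h2 : T.image γ ⊆ U.image γ := Finset.image_subset_image Finset.subset_union_right
    have hinter := hrange.convexHull_inter h1 h2
    have hdisj : (S.image γ) ∩ (T.image γ) = ∅ := by
      rw [← Finset.image_inter _ _ hγinj, Finset.disjoint_iff_inter_eq_empty.mp hST,
        Finset.image_empty]
    rw [Set.disjoint_iff_inter_eq_empty]
    rw [← Finset.coe_image, ← Finset.coe_image, ← hinter, ← Finset.coe_inter, hdisj]
    simp
end

section
/- Let T₁, …, T_m be pairwise disjoint compact sets in ℝ³, each homeomorphic to the 2-sphere, and let u ∈ ℝ³ be a point that is connected by a segment (disjoint from every Tᵢ except possibly at endpoints) to at least one point of each Tᵢ. Then u lies in the bounded complementary component ('inside') of at most one of the Tᵢ. -/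
open Set Metric Bornology

/-- The "inside" of a compact set `T ⊆ ℝ³` (homeomorphic to a sphere): the set
of points not on `T` whose connected component in the complement of `T` is
bounded. -/
def insideOf (T : Set (EuclideanSpace ℝ (Fin 3))) : Set (EuclideanSpace ℝ (Fin 3)) :=
  {p | p ∉ T ∧ Bornology.IsBounded (connectedComponentIn Tᶜ p)}

lemma rank3 : 1 < Module.rank ℝ (EuclideanSpace ℝ (Fin 3)) := by
  have : Module.finrank ℝ (EuclideanSpace ℝ (Fin 3)) = 3 := finrank_euclideanSpace_fin
  have h := Module.finrank_eq_rank ℝ (EuclideanSpace ℝ (Fin 3))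
  rw [this] at h
  rw [← h]
  exact_mod_cast (by norm_num : (1:ℕ) < 3)

lemma compl_closedBall_preconnected {R : ℝ} (hR : 0 ≤ R) :
    IsPreconnected ((Metric.closedBall (0 : EuclideanSpace ℝ (Fin 3)) R)ᶜ) := by
  have hA : IsConnected ((sphere (0 : EuclideanSpace ℝ (Fin 3)) 1) ×ˢ (Ioi R)) :=
    (isConnected_sphere rank3 0 zero_le_one).prod isConnected_Ioi
  have hf : Continuous fun q : (EuclideanSpace ℝ (Fin 3)) × ℝ => q.2 • q.1 :=
    continuous_snd.smul continuous_fst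
  have himg := hA.image _ hf.continuousOn
  have heq : (fun q : (EuclideanSpace ℝ (Fin 3)) × ℝ => q.2 • q.1) ''
      ((sphere (0 : EuclideanSpace ℝ (Fin 3)) 1) ×ˢ (Ioi R))
      = (Metric.closedBall (0 : EuclideanSpace ℝ (Fin 3)) R)ᶜ := by
    ext y
    simp only [mem_image, mem_prod, mem_sphere_iff_norm, sub_zero, mem_Ioi, mem_compl_iff,
      Metric.mem_closedBall, dist_zero_right, not_le]
    constructor
    · rintro ⟨⟨v, t⟩, ⟨hv, ht⟩, rfl⟩
      have : ‖t • v‖ = |t| * ‖v‖ := norm_smul t v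
      rw [this, hv, mul_one, abs_of_pos (lt_of_le_of_lt hR ht)]
      exact ht
    · intro hy
      have hy0 : y ≠ 0 := by
        intro h; rw [h, norm_zero] at hy; exact absurd hy (not_lt.2 hR)
      have hny : ‖y‖ ≠ 0 := norm_ne_zero_iff.2 hy0
      refine ⟨⟨‖y‖⁻¹ • y, ‖y‖⟩, ⟨?_, hy⟩, ?_⟩
      · rw [norm_smul, norm_inv, norm_norm, inv_mul_cancel₀ hny]
      · simp only
        rw [smul_inv_smul₀ hny]
  rw [heq] at himg; exact himg.isPreconnected

/-- Let `T₁, …, T_m` be pairwise disjoint compact subsets of ℝ³, each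
homeomorphic to the 2-sphere, and let `u` be a point connected by a segment
(whose interior avoids all the `Tⱼ`) to a point of each `Tᵢ`. Then `u` lies in
the bounded complementary component of at most one of the `Tᵢ`. -/
theorem stmt11 {m : ℕ} (T : Fin m → Set (EuclideanSpace ℝ (Fin 3)))
    (hdisj : Pairwise (Function.onFun Disjoint T))
    (hcpt : ∀ i, IsCompact (T i))
    (hsph : ∀ i, Nonempty
      (↥(T i) ≃ₜ ↥(Metric.sphere (0 : EuclideanSpace ℝ (Fin 3)) 1)))
    (u : EuclideanSpace ℝ (Fin 3))
    (hseg : ∀ i, ∃ x ∈ T i, ∀ y ∈ openSegment ℝ u x, ∀ j, y ∉ T j) :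
    ∀ i j, u ∈ insideOf (T i) → u ∈ insideOf (T j) → i = j := by
  -- each T k is preconnected (homeomorphic to a connected sphere)
  have hconn : ∀ k, IsPreconnected (T k) := by
    intro k
    obtain ⟨e⟩ := hsph k
    have hs : IsConnected (sphere (0 : EuclideanSpace ℝ (Fin 3)) 1) :=
      isConnected_sphere rank3 0 zero_le_one
    have : ConnectedSpace ↥(sphere (0 : EuclideanSpace ℝ (Fin 3)) 1) :=
      isConnected_iff_connectedSpace.mp hs
    have huniv : IsPreconnected (univ : Set ↥(sphere (0 : EuclideanSpace ℝ (Fin 3)) 1)) :=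
      isPreconnected_univ
    have himg : IsPreconnected ((fun z => (e.symm z : EuclideanSpace ℝ (Fin 3))) '' univ) :=
      huniv.image _ (continuous_subtype_val.comp e.symm.continuous).continuousOn
    have : (fun z => (e.symm z : EuclideanSpace ℝ (Fin 3))) '' univ = T k := by
      ext y
      constructor
      · rintro ⟨z, -, rfl⟩; exact (e.symm z).2
      · intro hy; exact ⟨e ⟨y, hy⟩, mem_univ _, by simp⟩
    rwa [this] at himg
  have hTne : ∀ k, (T k).Nonempty := fun k => by
    obtain ⟨x, hx, -⟩ := hseg k; exact ⟨x, hx⟩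
  -- key containment: if u is inside T k and l ≠ k then T l ⊆ component of u in (T k)ᶜ
  have key : ∀ k l, k ≠ l → u ∈ insideOf (T k) →
      T l ⊆ connectedComponentIn (T k)ᶜ u := by
    intro k l hkl hk
    obtain ⟨x, hx, hxseg⟩ := hseg l
    have hxk : x ∉ T k := fun h => (hdisj hkl.symm).le_bot ⟨hx, h⟩
    have hsegsub : segment ℝ u x ⊆ (T k)ᶜ := by
      intro y hy
      rw [← insert_endpoints_openSegment] at hy
      rcases hy with rfl | rfl | hy
      · exact hk.1
      · exact hxk
      · exact hxseg y hy k
    have hxcomp : x ∈ connectedComponentIn (T k)ᶜ u :=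
      (convex_segment u x).isPreconnected.subset_connectedComponentIn
        (left_mem_segment ℝ u x) hsegsub (right_mem_segment ℝ u x)
    have hTlsub : T l ⊆ (T k)ᶜ := fun y hy h => (hdisj hkl.symm).le_bot ⟨hy, h⟩
    have := (hconn l).subset_connectedComponentIn hx hTlsub
    rwa [← connectedComponentIn_eq hxcomp] at this
  intro i j hi hj
  by_contra hij
  -- components
  set Ci := connectedComponentIn (T i)ᶜ u with hCi
  set Cj := connectedComponentIn (T j)ᶜ u with hCj
  have hTj_Ci : T j ⊆ Ci := key i j hij hi
  have hTi_Cj : T i ⊆ Cj := key j i (Ne.symm hij) hj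
  have hCjb : IsBounded Cj := hj.2
  have hCib : IsBounded Ci := hi.2
  -- big radius
  obtain ⟨R, hR0, hRsub⟩ := (hCjb.union (hcpt j).isBounded).subset_closedBall_lt 0 0
  -- far away point
  set w : EuclideanSpace ℝ (Fin 3) := EuclideanSpace.single (0 : Fin 3) (R + 1) with hw
  have hwnorm : ‖w‖ = R + 1 := by
    rw [hw, EuclideanSpace.norm_single]
    exact abs_of_pos (by linarith)
  have hwout : w ∉ Metric.closedBall (0 : EuclideanSpace ℝ (Fin 3)) R := by
    simp only [Metric.mem_closedBall, dist_zero_right, hwnorm, not_le]; linarith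
  have hwTj : w ∉ T j := fun h => hwout (hRsub (Or.inr h))
  set O := connectedComponentIn (T j)ᶜ w with hO
  have hwO : w ∈ O := mem_connectedComponentIn hwTj
  -- outside of ball is in O
  have hSsub : (Metric.closedBall (0 : EuclideanSpace ℝ (Fin 3)) R)ᶜ ⊆ O :=
    (compl_closedBall_preconnected hR0.le).subset_connectedComponentIn hwout
      (fun y hy h => hy (hRsub (Or.inr h)))
  -- O is unbounded
  have hOunb : ¬ IsBounded O := by
    intro hb
    have : IsBounded (univ : Set (EuclideanSpace ℝ (Fin 3))) := by
      have : (univ : Set (EuclideanSpace ℝ (Fin 3))) ⊆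
          O ∪ Metric.closedBall 0 R := fun y _ => by
        by_cases hy : y ∈ Metric.closedBall (0 : EuclideanSpace ℝ (Fin 3)) R
        · exact Or.inr hy
        · exact Or.inl (hSsub hy)
      exact (hb.union isBounded_closedBall).subset this
    obtain ⟨r, hr⟩ := this.subset_closedBall 0
    have := hr (mem_univ (EuclideanSpace.single (0 : Fin 3) (|r| + 1)))
    rw [Metric.mem_closedBall, dist_zero_right, EuclideanSpace.norm_single] at this
    have h1 : |r| + 1 ≤ r := le_trans (le_abs_self _) this
    have h2 : r ≤ |r| := le_abs_self r
    linarith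
  -- O is disjoint from Cj hence from T i
  have hOCj : O ∩ Cj = ∅ := by
    by_contra h
    obtain ⟨y, hyO, hyCj⟩ := nonempty_iff_ne_empty.2 h
    have h1 : O = connectedComponentIn (T j)ᶜ y := connectedComponentIn_eq hyO
    have h2 : Cj = connectedComponentIn (T j)ᶜ y := connectedComponentIn_eq hyCj
    have : w ∈ Cj := by rw [h2, ← h1]; exact hwO
    exact hwout (hRsub (Or.inl this))
  have hOTi : ∀ y ∈ O, y ∉ T i := fun y hyO hyTi =>
    (eq_empty_iff_forall_notMem.mp hOCj y) ⟨hyO, hTi_Cj hyTi⟩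
  -- O is open
  have hOopen : IsOpen O := ((hcpt j).isClosed.isOpen_compl).connectedComponentIn
  -- find boundary point p ∈ T j
  have hnotsub : ¬ closure O ⊆ O := by
    intro h
    have hclosed : IsClosed O := closure_subset_iff_isClosed.mp h
    have : O = ∅ ∨ O = univ := isClopen_iff.mp ⟨hclosed, hOopen⟩
    rcases this with h' | h'
    · rw [h'] at hwO; exact hwO
    · obtain ⟨x, hx⟩ := hTne j
      have : x ∈ O := h' ▸ mem_univ x
      exact connectedComponentIn_subset _ _ this hx
  obtain ⟨p, hpcl, hpO⟩ := not_subset.mp hnotsub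
  have hinsconn : IsPreconnected (insert p O) :=
    isPreconnected_connectedComponentIn.subset_closure (subset_insert p O)
      (insert_subset hpcl subset_closure)
  have hpTj : p ∈ T j := by
    by_contra hpTj
    have hsub : insert p O ⊆ (T j)ᶜ :=
      insert_subset hpTj (connectedComponentIn_subset _ _)
    have := hinsconn.subset_connectedComponentIn (mem_insert_iff.2 (Or.inr hwO)) hsub
    exact hpO (this (mem_insert p O))
  -- final contradiction: insert p O ∪ Ci is connected in (T i)ᶜ containing u
  have hpCi : p ∈ Ci := hTj_Ci hpTj
  have hunion : IsPreconnected (Ci ∪ insert p O) :=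
    IsPreconnected.union p hpCi (mem_insert p O)
      isPreconnected_connectedComponentIn hinsconn
  have hsubTi : Ci ∪ insert p O ⊆ (T i)ᶜ := by
    rintro y (hy | hy)
    · exact connectedComponentIn_subset _ _ hy
    · rcases hy with rfl | hy
      · exact fun h => (hdisj hij).le_bot ⟨h, hpTj⟩
      · exact hOTi y hy
  have huCi : u ∈ Ci := mem_connectedComponentIn hi.1
  have hfinal : Ci ∪ insert p O ⊆ Ci :=
    hunion.subset_connectedComponentIn (Or.inl huCi) hsubTi
  exact hOunb (hCib.subset (fun y hy => hfinal (Or.inr (mem_insert_iff.2 (Or.inr hy)))))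
end

section
/- Let u ∈ ℝ³, let e be a closed segment with endpoints s, t not collinear with u, and let W be the 2-dimensional wedge {u + λ(x − u) : x ∈ e, λ ≥ 0}. For p ∈ W \ (e ∪ {u}), say p > e if the segment u p does not meet e, and p < e if it does. If p, q ∈ W \ e satisfy p > e and q < e, and neither p nor q lies on the rays u s or u t, then the segment p q intersects the open segment e \ {s, t}. -/



lemma aux15 (u s t : Fin 3 → ℝ) (h : ¬ Collinear ℝ ({u, s, t} : Set (Fin 3 → ℝ)))
    (c d : ℝ) (hcd : c • (s - u) + d • (t - u) = 0) : c = 0 ∧ d = 0 := by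
  by_contra hne
  apply h
  rw [collinear_iff_of_mem (show u ∈ ({u,s,t} : Set (Fin 3 → ℝ)) by simp)]
  rcases eq_or_ne d 0 with hd | hd
  · subst hd
    have hc : c ≠ 0 := by tauto
    have hs : s = u := by
      have h2 : c • (s - u) = 0 := by simpa using hcd
      rcases smul_eq_zero.mp h2 with h3 | h3
      · exact absurd h3 hc
      · exact sub_eq_zero.mp h3
    refine ⟨t - u, fun x hx => ?_⟩
    simp only [Set.mem_insert_iff, Set.mem_singleton_iff] at hx
    rcases hx with rfl | rfl | rfl
    · exact ⟨0, by simp⟩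
    · exact ⟨0, by simp [hs]⟩
    · exact ⟨1, by simp⟩
  · refine ⟨s - u, fun x hx => ?_⟩
    simp only [Set.mem_insert_iff, Set.mem_singleton_iff] at hx
    rcases hx with rfl | hx | rfl
    · exact ⟨0, by simp⟩
    · subst hx; exact ⟨1, by simp⟩
    · refine ⟨-c/d, ?_⟩
      have key : x - u = (-c/d) • (s - u) := by
        apply smul_right_injective (Fin 3 → ℝ) hd
        show d • (x - u) = d • ((-c/d) • (s - u))
        rw [smul_smul]
        have : d * (-c/d) = -c := by field_simp
        rw [this]
        linear_combination (norm := module) hcd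
      simp only [vadd_eq_add]
      rw [← key]; abel

lemma aux15w (u s t y : Fin 3 → ℝ)
    (hy : ∃ x ∈ segment ℝ s t, ∃ l : ℝ, 0 ≤ l ∧ y = u + l • (x - u)) :
    ∃ α β : ℝ, 0 ≤ α ∧ 0 ≤ β ∧ y = u + α • (s - u) + β • (t - u) := by
  obtain ⟨x, hx, l, hl, hy⟩ := hy
  obtain ⟨ca, cb, hca, hcb, hsum, hx⟩ := hx
  refine ⟨l * ca, l * cb, mul_nonneg hl hca, mul_nonneg hl hcb, ?_⟩
  subst hy; rw [← hx]
  have hcb' : cb = 1 - ca := by linarith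
  subst hcb'
  module



/-- Above/below consistency in a wedge: let `u ∈ ℝ³`, let `e` be the segment
with endpoints `s, t` not collinear with `u`, and let `W` be the wedge of all
rays from `u` through points of `e`. If `p, q ∈ W \ e` with `p` above `e`
(segment `u p` misses `e`) and `q` below `e` (segment `u q` meets `e`), and
neither `p` nor `q` lies on the rays `u s` or `u t`, then the segment `p q`
meets the open edge `e \ {s, t}`. -/
theorem stmt15 (u s t p q : Fin 3 → ℝ) (hcol : ¬ Collinear ℝ ({u, s, t} : Set (Fin 3 → ℝ)))
    (hpW : p ∈ {y | ∃ x ∈ segment ℝ s t, ∃ l : ℝ, 0 ≤ l ∧ y = u + l • (x - u)} \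
      (segment ℝ s t ∪ {u}))
    (hqW : q ∈ {y | ∃ x ∈ segment ℝ s t, ∃ l : ℝ, 0 ≤ l ∧ y = u + l • (x - u)} \
      segment ℝ s t)
    (habove : segment ℝ u p ∩ segment ℝ s t = ∅)
    (hbelow : (segment ℝ u q ∩ segment ℝ s t).Nonempty)
    (hps : ¬ ∃ l : ℝ, 0 ≤ l ∧ p = u + l • (s - u))
    (hpt : ¬ ∃ l : ℝ, 0 ≤ l ∧ p = u + l • (t - u))
    (hqs : ¬ ∃ l : ℝ, 0 ≤ l ∧ q = u + l • (s - u))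
    (hqt : ¬ ∃ l : ℝ, 0 ≤ l ∧ q = u + l • (t - u)) :
    (segment ℝ p q ∩ (segment ℝ s t \ {s, t})).Nonempty := by
  have hst : s ≠ t := by
    rintro rfl
    exact hcol (by simpa using collinear_pair ℝ u s)
  obtain ⟨α, β, hα, hβ, hpab⟩ := aux15w u s t p hpW.1
  obtain ⟨γ, δ, hγ, hδ, hqab⟩ := aux15w u s t q hqW.1
  -- strict positivity
  have hα' : 0 < α := by
    rcases hα.lt_or_eq with h | h
    · exact h
    · exact absurd ⟨β, hβ, by rw [hpab, ← h]; module⟩ hpt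
  have hβ' : 0 < β := by
    rcases hβ.lt_or_eq with h | h
    · exact h
    · exact absurd ⟨α, hα, by rw [hpab, ← h]; module⟩ hps
  have hγ' : 0 < γ := by
    rcases hγ.lt_or_eq with h | h
    · exact h
    · exact absurd ⟨δ, hδ, by rw [hqab, ← h]; module⟩ hqt
  have hδ' : 0 < δ := by
    rcases hδ.lt_or_eq with h | h
    · exact h
    · exact absurd ⟨γ, hγ, by rw [hqab, ← h]; module⟩ hqs
  -- above: α + β < 1
  have hpsum : α + β < 1 := by
    by_contra h
    push_neg at h
    have hS : (0:ℝ) < α + β := by linarith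
    set μ : ℝ := (α + β)⁻¹ with hμdef
    have hμmul : μ * (α + β) = 1 := inv_mul_cancel₀ hS.ne'
    have hμpos : 0 < μ := inv_pos.mpr hS
    have hμle : μ ≤ 1 := by nlinarith
    have hz2 : (μ*α) • s + (μ*β) • t ∈ segment ℝ s t :=
      ⟨μ*α, μ*β, by positivity, by positivity, by linear_combination hμmul, rfl⟩
    have hz1 : (μ*α) • s + (μ*β) • t ∈ segment ℝ u p := by
      refine ⟨1 - μ, μ, by linarith, hμpos.le, by ring, ?_⟩
      rw [hpab]
      match_scalars
      · linear_combination -hμmul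
      · ring
      · ring
    have : ((μ*α) • s + (μ*β) • t) ∈ segment ℝ u p ∩ segment ℝ s t := ⟨hz1, hz2⟩
    rw [habove] at this
    exact this
  -- below: 1 < γ + δ
  have hqsum : 1 < γ + δ := by
    obtain ⟨z, hz1, hz2⟩ := hbelow
    obtain ⟨m1, μ, hm1, hμ, hmsum, hz1⟩ := hz1
    obtain ⟨c, d, hc, hd, hcdsum, hz2⟩ := hz2
    have hm1' : m1 = 1 - μ := by linarith
    subst hm1'
    have hd' : d = 1 - c := by linarith
    subst hd'
    have hvec : (μ*γ - c) • (s - u) + (μ*δ - (1 - c)) • (t - u) = 0 := by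
      linear_combination (norm := module) hz1 - hz2 - (μ : ℝ) • hqab
    obtain ⟨e1, e2⟩ := aux15 u s t hcol _ _ hvec
    have hμle : μ ≤ 1 := by linarith
    have hge : 1 ≤ γ + δ := by nlinarith
    rcases hge.lt_or_eq with h | h
    · exact h
    · exfalso
      apply hqW.2
      refine ⟨γ, δ, hγ, hδ, h.symm, ?_⟩
      rw [hqab]
      have hδ'' : δ = 1 - γ := by linarith
      subst hδ''
      module
  -- construct intersection point
  set lam : ℝ := (1 - (α + β)) / ((γ + δ) - (α + β)) with hlamdef
  have hD : (0:ℝ) < (γ + δ) - (α + β) := by linarith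
  have hlam0 : 0 < lam := div_pos (by linarith) hD
  have hlam1 : lam < 1 := (div_lt_one hD).mpr (by linarith)
  have hlamD : lam * ((γ + δ) - (α + β)) = 1 - (α + β) := div_mul_cancel₀ _ hD.ne'
  set A : ℝ := (1 - lam) * α + lam * γ with hAdef
  set B : ℝ := (1 - lam) * β + lam * δ with hBdef
  have hA : 0 < A := by nlinarith
  have hB : 0 < B := by nlinarith
  have hAB : A + B = 1 := by rw [hAdef, hBdef]; linear_combination hlamD
  refine ⟨A • s + B • t, ⟨1 - lam, lam, by linarith, hlam0.le, by ring, ?_⟩,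
    ⟨A, B, hA.le, hB.le, hAB, rfl⟩, ?_⟩
  · rw [hpab, hqab, hAdef, hBdef]
    match_scalars
    · linear_combination -hlamD
    · ring
    · ring
  · simp only [Set.mem_insert_iff, Set.mem_singleton_iff]
    push_neg
    have hA1 : A = 1 - B := by linarith
    constructor
    · intro hxs
      rw [hA1] at hxs
      have : B • (t - s) = 0 := by linear_combination (norm := module) hxs
      rcases smul_eq_zero.mp this with h | h
      · linarith
      · exact hst (sub_eq_zero.mp h).symm
    · intro hxt
      rw [hA1] at hxt
      have : B • (t - s) = t - s := by linear_combination (norm := module) hxt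
      have h2 : (B - 1) • (t - s) = 0 := by linear_combination (norm := module) this
      rcases smul_eq_zero.mp h2 with h | h
      · linarith
      · exact hst (sub_eq_zero.mp h).symm
end
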